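/- Let Ω₁ be a nonempty bounded open convex subset of ℝ^d with boundary Γ = frontier(Ω₁), and let φ be the signed distance function of Γ. If x₁ ∈ Ω₁ and x₂ lies in the exterior of Ω₁ (i.e., x₂ ∉ closure(Ω₁)), then for every θ ∈ [0,1], φ(θx₁ + (1−θ)x₂) ≤ θφ(x₁) + (1−θ)φ(x₂). -/

import Mathlib

open Classical in
noncomputable def sdf {d : ℕ} (Ω : Set (EuclideanSpace ℝ (Fin d)))
    (x : EuclideanSpace ℝ (Fin d)) : ℝ :=
  if x ∈ Ω then -(Metric.infDist x (frontier Ω)) else Metric.infDist x (frontier Ω)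

section aux

open Metric Set

variable {E : Type*} [NormedAddCommGroup E] [NormedSpace ℝ E]

/-- A segment from a point of an open set to a point outside its closure meets the frontier. -/
lemma segment_crosses_frontier {Ω : Set E} (hopen : IsOpen Ω) {a b : E}
    (ha : a ∈ Ω) (hb : b ∉ closure Ω) :
    ∃ z ∈ segment ℝ a b, z ∈ frontier Ω := by
  by_contra h
  push_neg at h
  have hpc : IsPreconnected (segment ℝ a b) := (convex_segment a b).isPreconnected
  have hsub : segment ℝ a b ⊆ Ω ∪ (closure Ω)ᶜ := by
    intro z hz
    rcases em (z ∈ closure Ω) with hc | hc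
    · left
      rw [closure_eq_self_union_frontier] at hc
      rcases hc with hc | hc
      · exact hc
      · exact absurd hc (h z hz)
    · exact Or.inr hc
  have := hpc Ω (closure Ω)ᶜ hopen isClosed_closure.isOpen_compl hsub
    ⟨a, left_mem_segment ℝ a b, ha⟩ ⟨b, right_mem_segment ℝ a b, hb⟩
  obtain ⟨z, _, hzΩ, hzc⟩ := this
  exact hzc (subset_closure hzΩ)

/-- The open ball around an interior point with radius the distance to the frontier
is contained in the open set. -/
lemma ball_infDist_frontier_subset {Ω : Set E} (hopen : IsOpen Ω) {x : E} (hx : x ∈ Ω) :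
    ball x (infDist x (frontier Ω)) ⊆ Ω := by
  intro w hw
  by_contra hw'
  rcases em (w ∈ closure Ω) with hc | hc
  · have hwf : w ∈ frontier Ω := by
      rw [hopen.frontier_eq]; exact ⟨hc, hw'⟩
    exact absurd (infDist_le_dist_of_mem hwf) (not_le.2 (mem_ball'.1 hw))
  · obtain ⟨z, hzseg, hzf⟩ := segment_crosses_frontier hopen hx hc
    have h1 : dist x z + dist z w = dist x w := dist_add_dist_of_mem_segment hzseg
    have h2 : infDist x (frontier Ω) ≤ dist x z := infDist_le_dist_of_mem hzf
    have h3 : dist x z ≤ dist x w := by linarith [dist_nonneg (x := z) (y := w)]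
    have h4 : dist x w < infDist x (frontier Ω) := mem_ball'.1 hw
    linarith

end aux

/-- convexity inequality for the SDF with one point inside `Ω₁`
and one point in the exterior. -/
theorem stmt_5 {d : ℕ} (Ω₁ : Set (EuclideanSpace ℝ (Fin d)))
    (hne : Ω₁.Nonempty) (hbdd : Bornology.IsBounded Ω₁) (hopen : IsOpen Ω₁)
    (hconv : Convex ℝ Ω₁) (x₁ x₂ : EuclideanSpace ℝ (Fin d))
    (hx₁ : x₁ ∈ Ω₁) (hx₂ : x₂ ∉ closure Ω₁) :
    ∀ θ : ℝ, 0 ≤ θ → θ ≤ 1 →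
      sdf Ω₁ (θ • x₁ + (1 - θ) • x₂) ≤ θ * sdf Ω₁ x₁ + (1 - θ) * sdf Ω₁ x₂ := by
  classical
  intro θ hθ0 hθ1
  set Γ := frontier Ω₁ with hΓ
  -- basic facts
  have hx₂Ω : x₂ ∉ Ω₁ := fun h => hx₂ (subset_closure h)
  have hΩne_univ : Ω₁ ≠ Set.univ := by
    intro h; exact hx₂Ω (h ▸ Set.mem_univ x₂)
  have hΓne : Γ.Nonempty := nonempty_frontier_iff.mpr ⟨hne, hΩne_univ⟩
  have hΓbdd : Bornology.IsBounded Γ :=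
    hbdd.closure.subset frontier_subset_closure
  have hΓcompact : IsCompact Γ :=
    Metric.isCompact_of_isClosed_isBounded isClosed_frontier hΓbdd
  have hΓΩ : ∀ z, z ∈ Γ → z ∉ Ω₁ := by
    intro z hz
    rw [hΓ, hopen.frontier_eq] at hz
    exact hz.2
  set r := Metric.infDist x₁ Γ with hrdef
  have hx₁Γ : x₁ ∉ Γ := fun h => hΓΩ x₁ h hx₁
  have hr : 0 < r := (isClosed_frontier.notMem_iff_infDist_pos hΓne).1 hx₁Γ
  have hball : Metric.ball x₁ r ⊆ Ω₁ := ball_infDist_frontier_subset hopen hx₁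
  obtain ⟨p, hpΓ, hpR⟩ := hΓcompact.exists_infDist_eq_dist hΓne x₂
  set R := Metric.infDist x₂ Γ with hRdef
  have hR0 : 0 ≤ R := Metric.infDist_nonneg
  -- sdf values at x₁ and x₂
  have hs1 : sdf Ω₁ x₁ = -r := by rw [sdf, if_pos hx₁]
  have hs2 : sdf Ω₁ x₂ = R := by rw [sdf, if_neg hx₂Ω]
  rw [hs1, hs2]
  -- trivial case θ = 0
  rcases eq_or_lt_of_le hθ0 with hθ0' | hθpos
  · subst hθ0'
    simp [sdf, if_neg hx₂Ω]
    exact le_rfl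
  set y := θ • x₁ + (1 - θ) • x₂ with hy
  set y' := θ • x₁ + (1 - θ) • p with hy'
  have hdyy' : dist y y' = (1 - θ) * R := by
    have h1 : y - y' = (1 - θ) • (x₂ - p) := by rw [hy, hy']; module
    rw [dist_eq_norm, h1, norm_smul, Real.norm_eq_abs, abs_of_nonneg (by linarith),
      ← dist_eq_norm, ← hpR]
  -- the ball of radius θ * r around y' is inside Ω₁
  have hball2 : Metric.ball y' (θ * r) ⊆ Ω₁ := by
    intro w hw
    set w₁ := x₁ + θ⁻¹ • (w - y') with hw₁
    have hcombo : θ • w₁ + (1 - θ) • p = w := by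
      rw [hw₁, hy', smul_add, smul_smul, mul_inv_cancel₀ (ne_of_gt hθpos)]
      module
    have hw₁ball : w₁ ∈ Metric.ball x₁ r := by
      rw [Metric.mem_ball, dist_eq_norm]
      have : w₁ - x₁ = θ⁻¹ • (w - y') := by rw [hw₁]; abel
      rw [this, norm_smul, Real.norm_eq_abs, abs_of_nonneg (le_of_lt (inv_pos.2 hθpos))]
      have hwlt : ‖w - y'‖ < θ * r := by rw [← dist_eq_norm, ← Metric.mem_ball]; exact hw
      calc θ⁻¹ * ‖w - y'‖ < θ⁻¹ * (θ * r) := by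
            exact mul_lt_mul_of_pos_left hwlt (inv_pos.2 hθpos)
        _ = r := by field_simp
    have hw₁Ω : w₁ ∈ interior Ω₁ := by rw [hopen.interior_eq]; exact hball hw₁ball
    have hpcl : p ∈ closure Ω₁ := frontier_subset_closure hpΓ
    have hmem := hconv.combo_interior_closure_mem_interior (a := θ) (b := 1 - θ)
      hw₁Ω hpcl hθpos (by linarith) (by ring)
    rw [hopen.interior_eq] at hmem
    rwa [hcombo] at hmem
  -- frontier points are at distance ≥ θ * r from y'
  have hfar : ∀ z, z ∈ Γ → θ * r ≤ dist y' z := by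
    intro z hz
    by_contra h
    have hzball : z ∈ Metric.ball y' (θ * r) := by
      rw [Metric.mem_ball, dist_comm]; exact not_le.1 h
    exact hΓΩ z hz (hball2 hzball)
  by_cases hyΩ : y ∈ Ω₁
  · -- inside case
    have hs3 : sdf Ω₁ y = -(Metric.infDist y Γ) := by rw [sdf, if_pos hyΩ]
    rw [hs3]
    have key : θ * r - (1 - θ) * R ≤ Metric.infDist y Γ := by
      rcases le_or_gt (θ * r - (1 - θ) * R) 0 with h | h
      · exact h.trans Metric.infDist_nonneg
      · by_contra hcon
        rw [not_le] at hcon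
        obtain ⟨z, hzΓ, hzd⟩ := (Metric.infDist_lt_iff hΓne).1 hcon
        have h1 := hfar z hzΓ
        have h2 : dist y' z ≤ dist y' y + dist y z := dist_triangle _ _ _
        have h3 : dist y' y = (1 - θ) * R := by rw [dist_comm]; exact hdyy'
        linarith
    linarith
  · -- outside (or boundary) case
    have hs3 : sdf Ω₁ y = Metric.infDist y Γ := by rw [sdf, if_neg hyΩ]
    rw [hs3]
    have hy'Ω : y' ∈ Ω₁ := hball2 (by
      rw [Metric.mem_ball, dist_self]; positivity)
    -- get a frontier point on the segment from y' to y
    obtain ⟨z, hzseg, hzΓ⟩ : ∃ z ∈ segment ℝ y' y, z ∈ Γ := by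
      rcases em (y ∈ closure Ω₁) with hc | hc
      · refine ⟨y, right_mem_segment ℝ y' y, ?_⟩
        rw [hΓ, hopen.frontier_eq]; exact ⟨hc, hyΩ⟩
      · exact segment_crosses_frontier hopen hy'Ω hc
    have h1 : dist y' z + dist z y = dist y' y := dist_add_dist_of_mem_segment hzseg
    have h2 : θ * r ≤ dist y' z := hfar z hzΓ
    have h3 : dist y' y = (1 - θ) * R := by rw [dist_comm]; exact hdyy'
    have h4 : Metric.infDist y Γ ≤ dist y z := Metric.infDist_le_dist_of_mem hzΓ
    rw [dist_comm] at h4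
    linarith
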